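/- Let W, L, H be positive reals, let c ∈ ℝ³, let w, q ∈ ℝ³ with w ≠ q, let U be a positive integer, and set d = ‖q − w‖/U. Assume d < min(W, L, H). Define the open cuboid B = {p ∈ ℝ³ : |p₁ − c₁| < W/2, |p₂ − c₂| < L/2, |p₃ − c₃| < H/2} and the expanded open cuboid B_exp = {p ∈ ℝ³ : |p₁ − c₁| < W/2 + d/(2√2), |p₂ − c₂| < L/2 + d/(2√2), |p₃ − c₃| < H/2 + d/(2√2)}. Define the sample points qᵘ = w + (u/U)·(q − w) for u ∈ {0, 1, …, U}. If qᵘ ∉ B_exp for every u, then the entire segment from w to q avoids B: for every t ∈ [0,1], the point w + t·(q − w) does not lie in B. -/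

import Mathlib

set_option maxHeartbeats 1000000


/-- corollary of Theorem 1; constraint (27) of the paper.
The segment between the ground node at `w` and the UAV at `q` is discretized
into `U` equal subsegments with sample points `qᵘ = w + (u/U)•(q − w)`, which
are at distance `d = ‖q − w‖/U` apart. If all sample points avoid the expanded
cuboid `B_exp` (centered at `c`, each half-dimension enlarged by `d/(2√2)`),
and `d < min (W, L, H)`, then the whole segment from `w` to `q` avoids the
open cuboid `B`. -/
theorem sampled_segment_avoids_cuboid
    (W L H : ℝ) (hW : 0 < W) (hL : 0 < L) (hH : 0 < H)
    (c w q : EuclideanSpace ℝ (Fin 3)) (hwq : w ≠ q)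
    (U : ℕ) (hU : 0 < U)
    (d : ℝ) (hd : d = ‖q - w‖ / U)
    (hdm : d < min W (min L H))
    (B Bexp : Set (EuclideanSpace ℝ (Fin 3)))
    (hB : B = {p | |p 0 - c 0| < W / 2 ∧ |p 1 - c 1| < L / 2 ∧ |p 2 - c 2| < H / 2})
    (hBexp : Bexp = {p | |p 0 - c 0| < W / 2 + d / (2 * Real.sqrt 2) ∧
                         |p 1 - c 1| < L / 2 + d / (2 * Real.sqrt 2) ∧
                         |p 2 - c 2| < H / 2 + d / (2 * Real.sqrt 2)})
    (hsample : ∀ u ≤ U, w + ((u : ℝ) / U) • (q - w) ∉ Bexp) :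
    ∀ t ∈ Set.Icc (0 : ℝ) 1, w + t • (q - w) ∉ B := by
  intro t ht hp
  obtain ⟨ht0, ht1⟩ := ht
  have hvpos : 0 < ‖q - w‖ := by
    rw [norm_pos_iff]
    intro h
    exact hwq (sub_eq_zero.mp h).symm
  have hUpos : (0:ℝ) < U := by exact_mod_cast hU
  have hdpos : 0 < d := by rw [hd]; positivity
  set m := d / (2 * Real.sqrt 2) with hm
  have hs2 : (0:ℝ) < Real.sqrt 2 := by positivity
  have hmpos : 0 < m := by rw [hm]; positivity
  have hm2 : 8 * m ^ 2 = d ^ 2 := by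
    have h2 : Real.sqrt 2 ^ 2 = 2 := Real.sq_sqrt (by norm_num)
    rw [hm, div_pow, mul_pow, h2]
    field_simp
    ring
  -- pick the sample index u with u ≤ tU ≤ u+1, u+1 ≤ U
  have hex : ∃ u : ℕ, u + 1 ≤ U ∧ (u:ℝ) ≤ t * U ∧ t * U ≤ u + 1 := by
    have htU0 : 0 ≤ t * U := by positivity
    rcases lt_or_ge ⌊t * U⌋₊ U with h | h
    · exact ⟨⌊t * U⌋₊, h, Nat.floor_le htU0, (Nat.lt_floor_add_one _).le⟩
    · refine ⟨U - 1, by omega, ?_, ?_⟩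
      · have h1 : (U:ℝ) ≤ ⌊t * U⌋₊ := by exact_mod_cast h
        have h2 : (⌊t * U⌋₊ : ℝ) ≤ t * U := Nat.floor_le htU0
        have h3 : ((U - 1 : ℕ) : ℝ) = (U:ℝ) - 1 := by
          push_cast [Nat.cast_sub hU]; ring
        rw [h3]; linarith
      · have h3 : ((U - 1 : ℕ) : ℝ) = (U:ℝ) - 1 := by
          push_cast [Nat.cast_sub hU]; ring
        rw [h3]
        nlinarith
  obtain ⟨u, huU, hu1, hu2⟩ := hex
  set s := t * U - u with hsdef
  have hs0 : 0 ≤ s := by rw [hsdef]; linarith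
  have hs1 : s ≤ 1 := by rw [hsdef]; linarith
  set v : EuclideanSpace ℝ (Fin 3) := q - w with hv
  -- norm facts
  have hnorm : ‖v‖ = d * U := by rw [hd]; field_simp
  have hsumsq : (v 0)^2 + (v 1)^2 + (v 2)^2 = (d*U)^2 := by
    have h1 : ‖v‖ ^ 2 = ∑ i, ‖v i‖ ^ 2 := by
      rw [EuclideanSpace.norm_eq, Real.sq_sqrt (by positivity)]
    rw [hnorm] at h1
    simp only [Fin.sum_univ_three, Real.norm_eq_abs, sq_abs] at h1
    linarith
  have hk3 : ∀ k : Fin 3, k = 0 ∨ k = 1 ∨ k = 2 := by decide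
  clear_value v s m
  have hvile : ∀ k, |v k| ≤ d * U := by
    intro k
    have h1 : (v k)^2 ≤ (d*U)^2 := by
      rcases hk3 k with rfl | rfl | rfl <;>
        nlinarith [sq_nonneg (v 0), sq_nonneg (v 1), sq_nonneg (v 2)]
    nlinarith [abs_nonneg (v k), sq_abs (v k), mul_pos hdpos hUpos]
  -- half-dimensions
  set R : Fin 3 → ℝ := ![W/2, L/2, H/2] with hR
  clear_value R
  have hRd : ∀ k, d < 2 * R k := by
    intro k
    have h1 : d < W := lt_of_lt_of_le hdm (min_le_left _ _)
    have h2 : d < L := lt_of_lt_of_le hdm ((min_le_right _ _).trans (min_le_left _ _))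
    have h3 : d < H := lt_of_lt_of_le hdm ((min_le_right _ _).trans (min_le_right _ _))
    rcases hk3 k with rfl | rfl | rfl <;> simp only [hR, Matrix.cons_val] <;> norm_num <;> linarith
  -- point-in-B, coordinatewise
  rw [hB] at hp
  simp only [Set.mem_setOf_eq, PiLp.add_apply, PiLp.smul_apply, smul_eq_mul] at hp
  obtain ⟨hp0, hp1, hp2⟩ := hp
  have hP : ∀ k : Fin 3, |(w k + t * v k) - c k| < R k := by
    intro k; rcases hk3 k with rfl | rfl | rfl <;> simp only [hR] <;> norm_num <;>
      [exact hp0; exact hp1; exact hp2]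
  -- sample points outside Bexp
  have ha := hsample u (by omega)
  have hb := hsample (u + 1) huU
  rw [hBexp] at ha hb
  simp only [Set.mem_setOf_eq, not_and_or, not_lt, PiLp.add_apply, PiLp.smul_apply,
    smul_eq_mul, Nat.cast_add, Nat.cast_one] at ha hb
  have hA : ∃ i : Fin 3, R i + m ≤ |(w i + ((u:ℝ)/U) * v i) - c i| := by
    rcases ha with h | h | h
    · exact ⟨0, by simpa [hR] using h⟩
    · exact ⟨1, by simpa [hR] using h⟩
    · exact ⟨2, by simpa [hR] using h⟩
  have hBj : ∃ j : Fin 3, R j + m ≤ |(w j + (((u:ℝ)+1)/U) * v j) - c j| := by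
    rcases hb with h | h | h
    · exact ⟨0, by simpa [hR] using h⟩
    · exact ⟨1, by simpa [hR] using h⟩
    · exact ⟨2, by simpa [hR] using h⟩
  obtain ⟨i, hai⟩ := hA
  obtain ⟨j, hbj⟩ := hBj
  -- key coordinate inequalities
  have hkeya : m * U < s * |v i| := by
    have hdiff : (w i + ((u:ℝ)/U) * v i) - (w i + t * v i) = -(s/U) * v i := by
      rw [hsdef]; field_simp; ring
    have htri := abs_sub_le (w i + ((u:ℝ)/U) * v i) (w i + t * v i) (c i)
    rw [hdiff, abs_mul, abs_neg, abs_of_nonneg (by positivity : (0:ℝ) ≤ s/U)] at htri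
    have h1 : m < s * |v i| / U := by have := hP i; linarith [mul_comm s (|v i|), (by ring : (s/U) * |v i| = s * |v i| / U)]
    exact (lt_div_iff₀ hUpos).mp h1
  have hkeyb : m * U < (1 - s) * |v j| := by
    have hdiff : (w j + (((u:ℝ)+1)/U) * v j) - (w j + t * v j) = ((1-s)/U) * v j := by
      rw [hsdef]; field_simp; ring
    have htri := abs_sub_le (w j + (((u:ℝ)+1)/U) * v j) (w j + t * v j) (c j)
    rw [hdiff, abs_mul,
      abs_of_nonneg (div_nonneg (by linarith) hUpos.le : (0:ℝ) ≤ (1-s)/U)] at htri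
    have h1 : m < (1-s) * |v j| / U := by have := hP j; linarith [(by ring : ((1-s)/U) * |v j| = (1-s) * |v j| / U)]
    exact (lt_div_iff₀ hUpos).mp h1
  by_cases hij : i = j
  · -- same coordinate: sign analysis
    subst hij
    set A := (w i + ((u:ℝ)/U) * v i) - c i with hA
    set Bq := (w i + (((u:ℝ)+1)/U) * v i) - c i with hBq
    have hcomb : (w i + t * v i) - c i = (1 - s) * A + s * Bq := by
      rw [hA, hBq, hsdef]; field_simp; ring
    have hABd : A - Bq = -(v i) / U := by rw [hA, hBq]; field_simp; ring
    have habs : |A - Bq| ≤ d := by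
      rw [hABd, abs_div, abs_neg, abs_of_pos hUpos, div_le_iff₀ hUpos]
      exact hvile i
    have hPi := hP i
    rw [hcomb] at hPi
    have hPi' := abs_lt.mp hPi
    rcases abs_cases A with ⟨hA1, hA2⟩ | ⟨hA1, hA2⟩ <;>
      rcases abs_cases Bq with ⟨hB1, hB2⟩ | ⟨hB1, hB2⟩
    · -- both right of box
      rw [hA1] at hai; rw [hB1] at hbj
      nlinarith [mul_le_mul_of_nonneg_left hai (by linarith : (0:ℝ) ≤ 1 - s),
        mul_le_mul_of_nonneg_left hbj hs0]
    · -- A right, Bq left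
      rw [hA1] at hai; rw [hB1] at hbj
      have h2 : d < 2 * R i := hRd i
      have h3 : A - Bq ≤ |A - Bq| := le_abs_self _
      linarith
    · -- A left, Bq right
      rw [hA1] at hai; rw [hB1] at hbj
      have h2 : d < 2 * R i := hRd i
      have h3 : Bq - A ≤ |A - Bq| := by rw [abs_sub_comm]; exact le_abs_self _
      linarith
    · -- both left of box
      rw [hA1] at hai; rw [hB1] at hbj
      nlinarith [mul_le_mul_of_nonneg_left hai (by linarith : (0:ℝ) ≤ 1 - s),
        mul_le_mul_of_nonneg_left hbj hs0]
  · -- distinct coordinates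
    clear hp0 hp1 hp2 ha hb hsample hB hBexp hP hvpos hnorm hvile hRd hai hbj hd hdm
    have hs0' : 0 < s := by
      by_contra hcon
      push_neg at hcon
      have h1 : s * |v i| ≤ 0 := mul_nonpos_of_nonpos_of_nonneg hcon (abs_nonneg _)
      linarith [mul_pos hmpos hUpos]
    have hs1' : s < 1 := by
      by_contra hcon
      push_neg at hcon
      have h1 : (1 - s) * |v j| ≤ 0 :=
        mul_nonpos_of_nonpos_of_nonneg (by linarith) (abs_nonneg _)
      linarith [mul_pos hmpos hUpos]
    have hsq : (v i)^2 + (v j)^2 ≤ (d*U)^2 := by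
      rcases hk3 i with rfl | rfl | rfl <;> rcases hk3 j with rfl | rfl | rfl <;>
        first
          | (exact absurd rfl hij)
          | linarith [hsumsq, sq_nonneg (v 0), sq_nonneg (v 1), sq_nonneg (v 2)]
    have hmU : 0 < m * U := mul_pos hmpos hUpos
    have e1 : (m*U)^2 < s^2 * (v i)^2 := by
      have h := pow_lt_pow_left₀ hkeya hmU.le two_ne_zero
      calc (m*U)^2 < (s * |v i|)^2 := h
        _ = s^2 * (v i)^2 := by rw [mul_pow, sq_abs]
    have e2 : (m*U)^2 < (1-s)^2 * (v j)^2 := by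
      have h := pow_lt_pow_left₀ hkeyb hmU.le two_ne_zero
      calc (m*U)^2 < ((1-s) * |v j|)^2 := h
        _ = (1-s)^2 * (v j)^2 := by rw [mul_pow, sq_abs]
    have f1 : (m*U)^2 * (1-s)^2 < s^2 * (v i)^2 * (1-s)^2 :=
      mul_lt_mul_of_pos_right e1 (pow_pos (by linarith) 2)
    have f2 : (m*U)^2 * s^2 < (1-s)^2 * (v j)^2 * s^2 :=
      mul_lt_mul_of_pos_right e2 (pow_pos hs0' 2)
    have f3 : s^2 * (1-s)^2 * ((v i)^2 + (v j)^2) ≤ s^2 * (1-s)^2 * (d*U)^2 :=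
      mul_le_mul_of_nonneg_left hsq (by positivity)
    have hfact : 8 * (s*(1-s))^2 ≤ s^2 + (1-s)^2 := by
      nlinarith [sq_nonneg (2*s - 1), mul_pos hs0' (by linarith : (0:ℝ) < 1 - s)]
    have hXpos : 0 < (m*U)^2 := by positivity
    have g2 : s^2*(1-s)^2*(d*U)^2 = 8*(s*(1-s))^2*(m*U)^2 := by
      have g1 : (d*U)^2 = 8 * (m*U)^2 := by rw [mul_pow, mul_pow, ← hm2]; ring
      rw [g1]; ring
    have g3 : 8*(s*(1-s))^2*(m*U)^2 ≤ (s^2+(1-s)^2)*(m*U)^2 :=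
      mul_le_mul_of_nonneg_right hfact hXpos.le
    linarith [f1, f2, f3, g2, g3]
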